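/- Let v : [0,1]×[0,1] → ℝ be twice continuously differentiable on the closed square [0,1]×[0,1], satisfy the wave equation ∂_t² v(t,x) = ∂_x² v(t,x) on [0,1]×[0,1], and have initial data v(0,x) = v₀(x) and ∂_t v(0,x) = v₁(x) for x ∈ [0,1], where v₀ is continuously differentiable. Then for every t ∈ [0,1] the trace identity v(t,0) + ∫_0^t ∂_x v(s,0) ds = v₀(t) + ∫_0^t v₁(s) ds holds; this is the identity obtained by matching the two d'Alembert representations of v at the point (t/2, t/2). -/

import Mathlib

open Set Real MeasureTheory intervalIntegral

/-- A classical solution of the wave equation `∂_t² v = ∂_x² v` on `[0,T] × [0,1]`: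
`v` is twice continuously differentiable up to the boundary, with first partial
derivatives `vt`, `vx`, second partial derivatives `vtt`, `vxx` and mixed partial
derivative `vtx`, all continuous on the closed rectangle. -/
structure IsWaveSol (T : ℝ) (v vt vx vtt vtx vxx : ℝ → ℝ → ℝ) : Prop where
  contv : ContinuousOn (fun p : ℝ × ℝ => v p.1 p.2) (Icc 0 T ×ˢ Icc 0 1)
  hvt : ∀ t ∈ Icc (0:ℝ) T, ∀ x ∈ Icc (0:ℝ) 1, HasDerivAt (fun τ => v τ x) (vt t x) t
  hvx : ∀ t ∈ Icc (0:ℝ) T, ∀ x ∈ Icc (0:ℝ) 1, HasDerivAt (fun y => v t y) (vx t x) x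
  hvtt : ∀ t ∈ Icc (0:ℝ) T, ∀ x ∈ Icc (0:ℝ) 1, HasDerivAt (fun τ => vt τ x) (vtt t x) t
  hvtx : ∀ t ∈ Icc (0:ℝ) T, ∀ x ∈ Icc (0:ℝ) 1, HasDerivAt (fun y => vt t y) (vtx t x) x
  hvxt : ∀ t ∈ Icc (0:ℝ) T, ∀ x ∈ Icc (0:ℝ) 1, HasDerivAt (fun τ => vx τ x) (vtx t x) t
  hvxx : ∀ t ∈ Icc (0:ℝ) T, ∀ x ∈ Icc (0:ℝ) 1, HasDerivAt (fun y => vx t y) (vxx t x) x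
  contvt : ContinuousOn (fun p : ℝ × ℝ => vt p.1 p.2) (Icc 0 T ×ˢ Icc 0 1)
  contvx : ContinuousOn (fun p : ℝ × ℝ => vx p.1 p.2) (Icc 0 T ×ˢ Icc 0 1)
  contvtt : ContinuousOn (fun p : ℝ × ℝ => vtt p.1 p.2) (Icc 0 T ×ˢ Icc 0 1)
  contvtx : ContinuousOn (fun p : ℝ × ℝ => vtx p.1 p.2) (Icc 0 T ×ˢ Icc 0 1)
  contvxx : ContinuousOn (fun p : ℝ × ℝ => vxx p.1 p.2) (Icc 0 T ×ˢ Icc 0 1)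
  wave : ∀ t ∈ Icc (0:ℝ) T, ∀ x ∈ Icc (0:ℝ) 1, vtt t x = vxx t x

open Asymptotics in
lemma char_deriv (f ft fx : ℝ → ℝ → ℝ) (a b : ℝ) {U : Set (ℝ × ℝ)} (hU : U ∈ nhds (a, b))
    (hft : HasDerivAt (fun τ => f τ b) (ft a b) a)
    (hfx : ∀ p : ℝ × ℝ, p ∈ U → HasDerivAt (fun y => f p.1 y) (fx p.1 p.2) p.2)
    (hfxc : ContinuousAt (fun p : ℝ × ℝ => fx p.1 p.2) (a, b)) :
    HasDerivAt (fun s => f s (a + b - s)) (ft a b - fx a b) a := by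
  rw [hasDerivAt_iff_isLittleO]
  simp only [add_sub_cancel_left]
  have hdecomp : (fun s => f s (a + b - s) - f a b - (s - a) • (ft a b - fx a b))
      = (fun s => (f s (a + b - s) - f s b + (s - a) * fx a b)
          + (f s b - f a b - (s - a) * ft a b)) := by
    funext s; simp only [smul_eq_mul]; ring
  rw [hdecomp]
  have h2 : (fun s => f s b - f a b - (s - a) * ft a b) =o[nhds a] fun s => s - a := by
    simpa [smul_eq_mul] using (hasDerivAt_iff_isLittleO.mp hft)
  refine IsLittleO.add ?_ h2
  rw [isLittleO_iff]
  intro ε hε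
  have hV : {p : ℝ × ℝ | p ∈ U ∧ |fx p.1 p.2 - fx a b| ≤ ε} ∈ nhds (a, b) := by
    filter_upwards [hU, hfxc (Metric.closedBall_mem_nhds _ hε)] with p h1 h2
    exact ⟨h1, by simpa [Real.dist_eq] using h2⟩
  obtain ⟨δ, hδ, hball⟩ := Metric.mem_nhds_iff.mp hV
  have hev : ∀ᶠ s in nhds a, dist s a < δ := Metric.eventually_nhds_iff_ball.mpr ⟨δ, hδ, fun y hy => by simpa [Real.dist_eq] using hy⟩
  filter_upwards [hev] with s hs
  set K := fx a b with hK
  have hmem : ∀ y ∈ uIcc b (a + b - s), ((s, y) : ℝ × ℝ) ∈ Metric.ball (a, b) δ := by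
    intro y hy
    have h1 : |y - b| ≤ |(a + b - s) - b| := abs_sub_left_of_mem_uIcc hy
    have h2 : |(a + b - s) - b| = |s - a| := by rw [abs_sub_comm]; ring_nf
    rw [Metric.mem_ball, Prod.dist_eq]
    have : dist y b < δ := by
      rw [Real.dist_eq]
      calc |y - b| ≤ |s - a| := h1.trans_eq h2
        _ < δ := by simpa [Real.dist_eq] using hs
    simp only [max_lt_iff]
    exact ⟨by simpa [Real.dist_eq] using hs, this⟩
  have hderiv : ∀ y ∈ uIcc b (a + b - s),
      HasDerivWithinAt (fun y => f s y - y * K) (fx s y - K) (uIcc b (a + b - s)) y := by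
    intro y hy
    have := ((hfx (s, y) (hball (hmem y hy)).1).sub ((hasDerivAt_id y).mul_const K)).hasDerivWithinAt (s := uIcc b (a + b - s))
    simpa [Pi.sub_def] using this
  have hbound : ∀ y ∈ uIcc b (a + b - s), ‖fx s y - K‖ ≤ ε := by
    intro y hy
    exact (hball (hmem y hy)).2
  have := (convex_uIcc b (a + b - s)).norm_image_sub_le_of_norm_hasDerivWithin_le
    hderiv hbound left_mem_uIcc right_mem_uIcc
  have heq : (f s (a + b - s) - (a + b - s) * K) - (f s b - b * K)
      = f s (a + b - s) - f s b + (s - a) * K := by ring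
  calc ‖f s (a + b - s) - f s b + (s - a) * K‖
      = ‖(f s (a + b - s) - (a + b - s) * K) - (f s b - b * K)‖ := by rw [heq]
    _ ≤ ε * ‖(a + b - s) - b‖ := this
    _ = ε * ‖s - a‖ := by rw [show (a + b - s) - b = -(s-a) by ring, norm_neg]

/-- For a twice continuously differentiable solution of the wave
equation on the closed unit square with initial data `v(0,·) = v₀`, `∂_t v(0,·) = v₁`
(`v₀` continuously differentiable with derivative `v₀'`), the trace identity
`v(t,0) + ∫_0^t ∂_x v(s,0) ds = v₀(t) + ∫_0^t v₁(s) ds` holds for every `t ∈ [0,1]`. -/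
theorem trace_identity (v vt vx vtt vtx vxx : ℝ → ℝ → ℝ) (v₀ v₀' v₁ : ℝ → ℝ)
    (hv : IsWaveSol 1 v vt vx vtt vtx vxx)
    (hv₀ : ∀ x ∈ Icc (0:ℝ) 1, v 0 x = v₀ x)
    (hv₁ : ∀ x ∈ Icc (0:ℝ) 1, vt 0 x = v₁ x)
    (hv₀d : ∀ x ∈ Icc (0:ℝ) 1, HasDerivAt v₀ (v₀' x) x)
    (hv₀c : ContinuousOn v₀' (Icc 0 1)) :
    ∀ t ∈ Icc (0:ℝ) 1,
      v t 0 + (∫ s in (0:ℝ)..t, vx s 0) = v₀ t + ∫ s in (0:ℝ)..t, v₁ s := by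
  obtain ⟨contv, hvt, hvx, hvtt, hvtx, hvxt, hvxx, contvt, contvx, contvtt, contvtx, contvxx,
    wave⟩ := hv
  have h01 : (0:ℝ) ∈ Icc (0:ℝ) 1 := ⟨le_rfl, zero_le_one⟩
  have hUopen : IsOpen (Ioo (0:ℝ) 1 ×ˢ Ioo (0:ℝ) 1) := isOpen_Ioo.prod isOpen_Ioo
  have hQU : (Ioo (0:ℝ) 1 ×ˢ Ioo (0:ℝ) 1) ⊆ Icc (0:ℝ) 1 ×ˢ Icc (0:ℝ) 1 :=
    prod_mono Ioo_subset_Icc_self Ioo_subset_Icc_self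
  -- constancy of vt+vx along characteristics
  have char : ∀ c ∈ Icc (0:ℝ) 1, vt c 0 + vx c 0 = vt 0 c + vx 0 c := by
    intro c hc
    rcases eq_or_lt_of_le hc.1 with h0 | h0
    · rw [← h0]
    set G : ℝ → ℝ := fun r => vt r (c - r) + vx r (c - r) with hG
    have hmaps : MapsTo (fun r => ((r, c - r) : ℝ × ℝ)) (Icc 0 c) (Icc (0:ℝ) 1 ×ˢ Icc (0:ℝ) 1) := by
      intro r hr
      exact ⟨⟨hr.1, hr.2.trans hc.2⟩, ⟨by simp; linarith [hr.2], by simp; nlinarith [hr.1, hc.2]⟩⟩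
    have hcontpath : ContinuousOn (fun r => ((r, c - r) : ℝ × ℝ)) (Icc 0 c) :=
      (continuous_id.prodMk (continuous_const.sub continuous_id)).continuousOn
    have hGc : ContinuousOn G (Icc 0 c) :=
      (contvt.comp hcontpath hmaps).add (contvx.comp hcontpath hmaps)
    have hGd : ∀ r ∈ Ioo (0:ℝ) c, HasDerivAt G 0 r := by
      intro r hr
      have hrp : ((r, c - r) : ℝ × ℝ) ∈ Ioo (0:ℝ) 1 ×ˢ Ioo (0:ℝ) 1 := by
        constructor
        · exact ⟨hr.1, lt_of_lt_of_le hr.2 hc.2⟩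
        · constructor
          · simp; linarith [hr.2]
          · simp; nlinarith [hr.1, hc.2]
      have hUn : Ioo (0:ℝ) 1 ×ˢ Ioo (0:ℝ) 1 ∈ nhds ((r, c - r) : ℝ × ℝ) := hUopen.mem_nhds hrp
      have hQn : Icc (0:ℝ) 1 ×ˢ Icc (0:ℝ) 1 ∈ nhds ((r, c - r) : ℝ × ℝ) :=
        Filter.mem_of_superset hUn hQU
      have hmem := hQU hrp
      have h1 : HasDerivAt (fun s => vt s (r + (c - r) - s)) (vtt r (c-r) - vtx r (c-r)) r :=
        char_deriv vt vtt vtx r (c - r) hUn (hvtt r hmem.1 (c - r) hmem.2)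
          (fun p hp => hvtx p.1 (hQU hp).1 p.2 (hQU hp).2) (contvtx.continuousAt hQn)
      have h2 : HasDerivAt (fun s => vx s (r + (c - r) - s)) (vtx r (c-r) - vxx r (c-r)) r :=
        char_deriv vx vtx vxx r (c - r) hUn (hvxt r hmem.1 (c - r) hmem.2)
          (fun p hp => hvxx p.1 (hQU hp).1 p.2 (hQU hp).2) (contvxx.continuousAt hQn)
      have hrc : r + (c - r) = c := by ring
      rw [hrc] at h1 h2
      have hzero : (vtt r (c-r) - vtx r (c-r)) + (vtx r (c-r) - vxx r (c-r)) = 0 := by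
        rw [wave r hmem.1 (c - r) hmem.2]; ring
      have := h1.add h2
      rwa [hzero] at this
    have hint : ∫ y in (0:ℝ)..c, (0:ℝ) = G c - G 0 :=
      integral_eq_sub_of_hasDeriv_right_of_le h0.le hGc
        (fun x hx => (hGd x hx).hasDerivWithinAt) intervalIntegrable_const
    have hG0 : G c = G 0 := by
      simp at hint; linarith
    simpa [hG, sub_self] using hG0
  -- vx 0 x = v₀' x at interior points
  have hvx0 : ∀ x ∈ Ioo (0:ℝ) 1, vx 0 x = v₀' x := by
    intro x hx
    have h1 : HasDerivAt (fun y => v 0 y) (vx 0 x) x := hvx 0 h01 x (Ioo_subset_Icc_self hx)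
    have heq : (fun y => v 0 y) =ᶠ[nhds x] v₀ :=
      Filter.eventuallyEq_of_mem (Filter.mem_of_superset (isOpen_Ioo.mem_nhds hx)
        Ioo_subset_Icc_self) (fun y hy => hv₀ y hy)
    have h2 : HasDerivAt v₀ (vx 0 x) x := h1.congr_of_eventuallyEq heq.symm
    exact h2.unique (hv₀d x (Ioo_subset_Icc_self hx))
  intro t ht
  have hsub : Icc (0:ℝ) t ⊆ Icc (0:ℝ) 1 := Icc_subset_Icc le_rfl ht.2
  have huIcc : uIcc (0:ℝ) t = Icc 0 t := uIcc_of_le ht.1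
  have cvt0 : ContinuousOn (fun s => vt s 0) (Icc (0:ℝ) 1) :=
    contvt.comp (continuous_id.prodMk continuous_const).continuousOn
      (fun s hs => ⟨hs, h01⟩)
  have cvx0 : ContinuousOn (fun s => vx s 0) (Icc (0:ℝ) 1) :=
    contvx.comp (continuous_id.prodMk continuous_const).continuousOn
      (fun s hs => ⟨hs, h01⟩)
  have cv1 : ContinuousOn v₁ (Icc (0:ℝ) 1) := by
    have : ContinuousOn (fun s => vt 0 s) (Icc (0:ℝ) 1) :=
      contvt.comp (continuous_const.prodMk continuous_id).continuousOn
        (fun s hs => ⟨h01, hs⟩)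
    exact this.congr (fun s hs => (hv₁ s hs).symm)
  have ivt : IntervalIntegrable (fun s => vt s 0) volume 0 t :=
    (cvt0.mono (huIcc ▸ hsub)).intervalIntegrable
  have ivx : IntervalIntegrable (fun s => vx s 0) volume 0 t :=
    (cvx0.mono (huIcc ▸ hsub)).intervalIntegrable
  have iv1 : IntervalIntegrable v₁ volume 0 t := (cv1.mono (huIcc ▸ hsub)).intervalIntegrable
  have iv0 : IntervalIntegrable v₀' volume 0 t := (hv₀c.mono (huIcc ▸ hsub)).intervalIntegrable
  have hFTCv : ∫ s in (0:ℝ)..t, vt s 0 = v t 0 - v 0 0 :=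
    integral_eq_sub_of_hasDerivAt
      (fun s hs => hvt s (hsub (huIcc ▸ hs)) 0 h01) ivt
  have hFTC0 : ∫ s in (0:ℝ)..t, v₀' s = v₀ t - v₀ 0 :=
    integral_eq_sub_of_hasDerivAt (fun s hs => hv₀d s (hsub (huIcc ▸ hs))) iv0
  have hkey : ∫ s in (0:ℝ)..t, (vt s 0 + vx s 0) = ∫ s in (0:ℝ)..t, (v₀' s + v₁ s) := by
    apply intervalIntegral.integral_congr_ae
    have hone : ∀ᵐ (s : ℝ), s ≠ 1 := by
      have : (volume : Measure ℝ) {(1:ℝ)} = 0 := measure_singleton 1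
      exact measure_eq_zero_iff_ae_notMem.mp this
    filter_upwards [hone] with s hs1 hsI
    rw [uIoc_of_le ht.1] at hsI
    have hsIcc : s ∈ Icc (0:ℝ) 1 := ⟨hsI.1.le, hsI.2.trans ht.2⟩
    have hsIoo : s ∈ Ioo (0:ℝ) 1 := ⟨hsI.1, lt_of_le_of_ne hsIcc.2 hs1⟩
    rw [char s hsIcc, hv₁ s hsIcc, hvx0 s hsIoo]
    ring
  rw [integral_add ivt ivx, integral_add iv0 iv1] at hkey
  have hv00 : v 0 0 = v₀ 0 := hv₀ 0 h01
  linarith [hkey, hFTCv, hFTC0]
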